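/- If a graph G contains a copy of K_6 and no copy of \widehat{P}_5, then no edge of that K_6 lies in a triangle of G using a vertex outside the K_6; moreover, the sets N_G(a_i) \setminus \{a_1,...,a_6\} for the six vertices a_1,...,a_6 of the K_6 are pairwise disjoint, so one of them has size at most (n-6)/6 when G has n vertices. -/

import Mathlib

open SimpleGraph

/-- `G` contains a copy of `H` (a subgraph isomorphic to `H`). -/
def containsCopy {W V : Type*} (H : SimpleGraph W) (G : SimpleGraph V) : Prop :=
  ∃ f : H →g G, Function.Injective f

/-- The number of triangles of `G`. -/
noncomputable def triCount {V : Type*} (G : SimpleGraph V) : ℕ :=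
  {s : Finset V | G.IsNClique 3 s}.ncard

/-- The number of edges of `G`. -/
noncomputable def edgeCount {V : Type*} (G : SimpleGraph V) : ℕ :=
  G.edgeSet.ncard

/-- The suspension `K_1 ∨ H` of a graph `H`: a new vertex (`none`) joined to all
vertices of `H`. -/
def susp {W : Type*} (H : SimpleGraph W) : SimpleGraph (Option W) where
  Adj a b :=
    match a, b with
    | some x, some y => H.Adj x y
    | some _, none => True
    | none, some _ => True
    | none, none => False
  symm := by
    refine ⟨?_⟩
    rintro (_ | x) (_ | y) h
    · exact h
    · trivial
    · trivial
    · exact h.symm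
  loopless := by
    refine ⟨?_⟩
    rintro (_ | x) h
    · exact h
    · exact H.irrefl h

/-- The Turán number: maximum number of edges of an `H`-free graph on `n` vertices. -/
noncomputable def exNum (n : ℕ) {W : Type*} (H : SimpleGraph W) : ℕ :=
  sSup {m | ∃ G : SimpleGraph (Fin n), ¬ containsCopy H G ∧ edgeCount G = m}

/-- The codegree of the pair `a, b`: number of common neighbours. -/
noncomputable def codeg {V : Type*} (G : SimpleGraph V) (a b : V) : ℕ :=
  (G.neighborSet a ∩ G.neighborSet b).ncard

def myMap {V : Type*} (a x b c0 c1 c2 c3 : V) : Option (Fin 6) → V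
  | none => a
  | some ⟨0, _⟩ => x
  | some ⟨1, _⟩ => b
  | some ⟨2, _⟩ => c0
  | some ⟨3, _⟩ => c1
  | some ⟨4, _⟩ => c2
  | some ⟨5, _⟩ => c3

lemma myMap_inj {V : Type*} {a x b c0 c1 c2 c3 : V}
    (h1 : a ≠ x) (h2 : a ≠ b) (h3 : a ≠ c0) (h4 : a ≠ c1) (h5 : a ≠ c2) (h6 : a ≠ c3)
    (h7 : x ≠ b) (h8 : x ≠ c0) (h9 : x ≠ c1) (h10 : x ≠ c2) (h11 : x ≠ c3)
    (h12 : b ≠ c0) (h13 : b ≠ c1) (h14 : b ≠ c2) (h15 : b ≠ c3)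
    (h16 : c0 ≠ c1) (h17 : c0 ≠ c2) (h18 : c0 ≠ c3)
    (h19 : c1 ≠ c2) (h20 : c1 ≠ c3) (h21 : c2 ≠ c3) :
    Function.Injective (myMap a x b c0 c1 c2 c3) := by
  rintro (_ | i) (_ | j) heq
  · rfl
  · fin_cases j <;> simp [myMap] at heq <;> simp_all
  · fin_cases i <;> simp [myMap] at heq <;> simp_all
  · fin_cases i <;> fin_cases j <;> simp [myMap] at heq <;> simp_all

lemma myMap_hom {V : Type*} {G : SimpleGraph V} {a x b c0 c1 c2 c3 : V}
    (hax : G.Adj a x) (hab : G.Adj a b) (ha0 : G.Adj a c0) (ha1 : G.Adj a c1)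
    (ha2 : G.Adj a c2) (ha3 : G.Adj a c3) (hxb : G.Adj x b) (hb0 : G.Adj b c0)
    (h01 : G.Adj c0 c1) (h12 : G.Adj c1 c2) (h23 : G.Adj c2 c3) :
    ∀ {u v : Option (Fin 6)}, (susp (pathGraph 6)).Adj u v →
      G.Adj (myMap a x b c0 c1 c2 c3 u) (myMap a x b c0 c1 c2 c3 v) := by
  rintro (_ | i) (_ | j) h
  · exact absurd h (by simp [susp])
  · fin_cases j <;> simp only [myMap] <;>
      first | exact hax | exact hab | exact ha0 | exact ha1 | exact ha2 | exact ha3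
  · fin_cases i <;> simp only [myMap] <;>
      first
        | exact hax.symm
        | exact hab.symm
        | exact ha0.symm
        | exact ha1.symm
        | exact ha2.symm
        | exact ha3.symm
  · have h' : (pathGraph 6).Adj i j := h
    rw [pathGraph_adj] at h'
    fin_cases i <;> fin_cases j <;> simp only [myMap] <;>
      first
        | (exfalso; revert h'; decide)
        | exact hxb | exact hxb.symm
        | exact hb0 | exact hb0.symm
        | exact h01 | exact h01.symm
        | exact h12 | exact h12.symm
        | exact h23 | exact h23.symm

lemma build_copy {V : Type*} (G : SimpleGraph V) (s : Finset V) (hs : G.IsNClique 6 s)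
    (a b x : V) (ha : a ∈ s) (hb : b ∈ s) (hab : a ≠ b) (hx : x ∉ s)
    (hax : G.Adj a x) (hbx : G.Adj b x) : containsCopy (susp (pathGraph 6)) G := by
  classical
  set t := (s.erase a).erase b with ht
  have htcard : t.card = 4 := by
    rw [ht, Finset.card_erase_of_mem (Finset.mem_erase.2 ⟨Ne.symm hab, hb⟩),
      Finset.card_erase_of_mem ha, hs.2]
  have e : t ≃ Fin 4 := t.equivFinOfCardEq htcard
  have hgmem : ∀ i, (e.symm i : V) ∈ t := fun i => (e.symm i).2
  set g : Fin 4 → V := fun i => (e.symm i : V) with hg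
  have hgmem' : ∀ i, g i ∈ t := hgmem
  have hgs : ∀ i, g i ∈ s := fun i => Finset.mem_of_mem_erase (Finset.mem_of_mem_erase (hgmem' i))
  have hga : ∀ i, g i ≠ a := fun i =>
    (Finset.mem_erase.1 (Finset.mem_of_mem_erase (hgmem' i))).1
  have hgb : ∀ i, g i ≠ b := fun i => (Finset.mem_erase.1 (hgmem' i)).1
  have hginj : ∀ i j : Fin 4, i ≠ j → g i ≠ g j := by
    intro i j hij hgij
    exact hij (e.symm.injective (Subtype.ext hgij))
  have hadj : ∀ u ∈ s, ∀ v ∈ s, u ≠ v → G.Adj u v := fun u hu v hv huv => hs.1 hu hv huv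
  have hxa : x ≠ a := fun h => hx (h ▸ ha)
  have hxb : x ≠ b := fun h => hx (h ▸ hb)
  have hxg : ∀ i, x ≠ g i := fun i h => hx (h ▸ hgs i)
  refine ⟨⟨myMap a x b (g 0) (g 1) (g 2) (g 3), ?_⟩, ?_⟩
  · exact myMap_hom hax (hadj a ha b hb hab)
      (hadj a ha _ (hgs 0) (Ne.symm (hga 0))) (hadj a ha _ (hgs 1) (Ne.symm (hga 1)))
      (hadj a ha _ (hgs 2) (Ne.symm (hga 2))) (hadj a ha _ (hgs 3) (Ne.symm (hga 3)))
      hbx.symm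
      (hadj b hb _ (hgs 0) (Ne.symm (hgb 0)))
      (hadj _ (hgs 0) _ (hgs 1) (hginj 0 1 (by decide)))
      (hadj _ (hgs 1) _ (hgs 2) (hginj 1 2 (by decide)))
      (hadj _ (hgs 2) _ (hgs 3) (hginj 2 3 (by decide)))
  · exact myMap_inj (Ne.symm hxa) hab (Ne.symm (hga 0)) (Ne.symm (hga 1))
      (Ne.symm (hga 2)) (Ne.symm (hga 3)) hxb (hxg 0) (hxg 1) (hxg 2) (hxg 3)
      (Ne.symm (hgb 0)) (Ne.symm (hgb 1)) (Ne.symm (hgb 2)) (Ne.symm (hgb 3))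
      (hginj 0 1 (by decide)) (hginj 0 2 (by decide)) (hginj 0 3 (by decide))
      (hginj 1 2 (by decide)) (hginj 1 3 (by decide)) (hginj 2 3 (by decide))

/-- If `G` is `\widehat{P}_5`-free and contains a `K_6` on vertex set `s`, then no
edge of the `K_6` lies in a triangle through an outside vertex, the external
neighbourhoods of its six vertices are pairwise disjoint, and one of them has
size at most `(n - 6)/6`. -/
theorem K6_block_structure {V : Type*} [Fintype V] (G : SimpleGraph V)
    (hP5 : ¬ containsCopy (susp (pathGraph 6)) G)
    (s : Finset V) (hs : G.IsNClique 6 s) :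
    (∀ a ∈ s, ∀ b ∈ s, a ≠ b → ∀ x : V, x ∉ s → ¬ (G.Adj a x ∧ G.Adj b x)) ∧
    (∀ a ∈ s, ∀ b ∈ s, a ≠ b →
      Disjoint (G.neighborSet a \ ↑s) (G.neighborSet b \ ↑s)) ∧
    (∃ a ∈ s, (G.neighborSet a \ ↑s).ncard ≤ (Fintype.card V - 6) / 6) := by
  classical
  have part1 : ∀ a ∈ s, ∀ b ∈ s, a ≠ b → ∀ x : V, x ∉ s → ¬ (G.Adj a x ∧ G.Adj b x) := by
    rintro a ha b hb hab x hx ⟨hax, hbx⟩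
    exact hP5 (build_copy G s hs a b x ha hb hab hx hax hbx)
  have part2 : ∀ a ∈ s, ∀ b ∈ s, a ≠ b →
      Disjoint (G.neighborSet a \ ↑s) (G.neighborSet b \ ↑s) := by
    intro a ha b hb hab
    rw [Set.disjoint_left]
    rintro x ⟨hxa, hxs⟩ ⟨hxb, -⟩
    exact part1 a ha b hb hab x (by simpa using hxs) ⟨hxa, hxb⟩
  refine ⟨part1, part2, ?_⟩
  by_contra hcon
  push_neg at hcon
  set F : V → Finset V := fun a => (Set.toFinite (G.neighborSet a \ ↑s)).toFinset with hF
  have hFcard : ∀ a, (G.neighborSet a \ ↑s).ncard = (F a).card := fun a =>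
    Set.ncard_eq_toFinset_card _ _
  have hdisj : ∀ a ∈ s, ∀ b ∈ s, a ≠ b → Disjoint (F a) (F b) := by
    intro a ha b hb hab
    rw [hF]
    simp only [Set.Finite.disjoint_toFinset]
    exact part2 a ha b hb hab
  have hsum : ∑ a ∈ s, (F a).card = (s.biUnion F).card := (Finset.card_biUnion hdisj).symm
  have hsub : s.biUnion F ⊆ sᶜ := by
    intro x hxu
    rcases Finset.mem_biUnion.1 hxu with ⟨a, _, hxa⟩
    rw [hF, Set.Finite.mem_toFinset] at hxa
    exact Finset.mem_compl.2 (by simpa using hxa.2)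
  have hle : ∑ a ∈ s, (F a).card ≤ Fintype.card V - 6 := by
    rw [hsum]
    calc (s.biUnion F).card ≤ (sᶜ).card := Finset.card_le_card hsub
      _ = Fintype.card V - 6 := by rw [Finset.card_compl, hs.2]
  have hge : ∀ a ∈ s, (Fintype.card V - 6) / 6 + 1 ≤ (F a).card := by
    intro a ha
    have := hcon a ha
    rw [hFcard] at this
    omega
  have : 6 * ((Fintype.card V - 6) / 6 + 1) ≤ ∑ a ∈ s, (F a).card := by
    calc 6 * ((Fintype.card V - 6) / 6 + 1)
        = ∑ _a ∈ s, ((Fintype.card V - 6) / 6 + 1) := by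
          rw [Finset.sum_const, hs.2, smul_eq_mul, mul_comm]
      _ ≤ ∑ a ∈ s, (F a).card := Finset.sum_le_sum hge
  omega
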